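/- For every k ≥ 1, the subspace V_k of V^{⊗k} is a simple two-dimensional Dic∞-subrepresentation, and for i ≠ j (i,j ≥ 1) the representations V_i and V_j are not isomorphic as Dic∞-representations. -/

import Mathlib

open scoped TensorProduct
open Matrix

noncomputable section

/-- `ℂ²`, the standard two-dimensional complex vector space. -/
abbrev V2 : Type := Fin 2 → ℂ

/-- The standard representation of a subgroup `G ≤ GL₂(ℂ)` on `ℂ²`, by matrix-vector
multiplication. -/
def stdRep (G : Subgroup (GL (Fin 2) ℂ)) : Representation ℂ G V2 where
  toFun g := Matrix.toLin' ((g : GL (Fin 2) ℂ) : Matrix (Fin 2) (Fin 2) ℂ)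
  map_one' := by
    simp only [OneMemClass.coe_one, Units.val_one, Matrix.toLin'_one]
    rfl
  map_mul' g h := by
    simp only [MulMemClass.coe_mul, Units.val_mul, Matrix.toLin'_mul]
    rfl

/-- `TPow j` is the `(j+1)`-st tensor power `V^{⊗(j+1)}` of `V = ℂ²`, realized as an
iterated binary tensor product (bundled as an object of `ModuleCat ℂ` so that the
recursion carries its module structure). -/
def TPow : ℕ → ModuleCat ℂ
  | 0 => ModuleCat.of ℂ V2
  | (j + 1) => ModuleCat.of ℂ (TPow j ⊗[ℂ] V2)

/-- The diagonal representation of `G ≤ GL₂(ℂ)` on `TPow j = V^{⊗(j+1)}`. -/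
def TPowRep (G : Subgroup (GL (Fin 2) ℂ)) : (j : ℕ) → Representation ℂ G (TPow j)
  | 0 => stdRep G
  | (j + 1) => (TPowRep G j).tprod (stdRep G)

/-- The basis vector `v_s^{⊗(j+1)}` of `TPow j = V^{⊗(j+1)}`, for `s : Fin 2`. -/
def vpow (s : Fin 2) : (j : ℕ) → TPow j
  | 0 => Pi.single s 1
  | (j + 1) => vpow s j ⊗ₜ[ℂ] Pi.single s 1

/-- The subspace `V_{j+1}` of `V^{⊗(j+1)}` spanned by `v₁^{⊗(j+1)}` and `v₂^{⊗(j+1)}`. -/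
def Vsub (j : ℕ) : Submodule ℂ (TPow j) := Submodule.span ℂ {vpow 0 j, vpow 1 j}

/-- Componentwise-product collapse map `V^{⊗(j+1)} → V2`. -/
def phiV : (j : ℕ) → TPow j →ₗ[ℂ] V2
  | 0 => LinearMap.id
  | (j + 1) => TensorProduct.lift ((LinearMap.mul ℂ V2).comp (phiV j))

lemma phiV_vpow (s : Fin 2) : ∀ j, phiV j (vpow s j) = Pi.single s 1
  | 0 => rfl
  | (j + 1) => by
    show TensorProduct.lift ((LinearMap.mul ℂ V2).comp (phiV j)) (vpow s j ⊗ₜ[ℂ] Pi.single s 1)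
      = Pi.single s 1
    rw [TensorProduct.lift.tmul]
    simp only [LinearMap.comp_apply, phiV_vpow s j, LinearMap.mul_apply']
    ext t
    by_cases h : t = s <;> simp [h, Pi.single_apply]

lemma vpow_li (j : ℕ) : LinearIndependent ℂ ![vpow 0 j, vpow 1 j] := by
  have h : LinearIndependent ℂ (fun s : Fin 2 => (Pi.single s 1 : V2)) := by
    rw [Fintype.linearIndependent_iff]
    intro g hg i
    fin_cases i <;> simpa [Fin.sum_univ_two, Pi.single_apply] using congrFun hg _
  have hcomp : (phiV j) ∘ ![vpow 0 j, vpow 1 j] = fun s : Fin 2 => (Pi.single s 1 : V2) := by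
    funext s
    fin_cases s <;> simp [phiV_vpow]
  exact LinearIndependent.of_comp (phiV j) (by rw [hcomp]; exact h)

lemma tpowrep_vpow {G : Subgroup (GL (Fin 2) ℂ)} (g : G) {s t : Fin 2} {c : ℂ}
    (h : stdRep G g (Pi.single s 1) = c • (Pi.single t 1 : V2)) :
    ∀ j, TPowRep G j g (vpow s j) = c ^ (j + 1) • vpow t j
  | 0 => by
    show stdRep G g (Pi.single s 1) = c ^ (0 + 1) • (Pi.single t 1 : V2)
    simpa using h
  | (j + 1) => by
    show (TPowRep G j).tprod (stdRep G) g (vpow s j ⊗ₜ[ℂ] Pi.single s 1)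
      = c ^ (j + 2) • (vpow t j ⊗ₜ[ℂ] Pi.single t 1)
    rw [Representation.tprod_apply, TensorProduct.map_tmul, tpowrep_vpow g h j, h,
      TensorProduct.smul_tmul_smul]
    ring_nf

lemma stdRep_apply {G : Subgroup (GL (Fin 2) ℂ)} (g : G) (v : V2) :
    stdRep G g v = ((g : GL (Fin 2) ℂ) : Matrix (Fin 2) (Fin 2) ℂ).mulVec v :=
  Matrix.toLin'_apply _ v

lemma stdRep_X0 {G : Subgroup (GL (Fin 2) ℂ)} (g : G)
    (h : ((g : GL (Fin 2) ℂ) : Matrix (Fin 2) (Fin 2) ℂ) = !![0, -1; 1, 0]) :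
    stdRep G g (Pi.single 0 1) = (1 : ℂ) • (Pi.single 1 1 : V2) := by
  rw [stdRep_apply, h]
  ext i
  fin_cases i <;> simp [Matrix.mulVec, dotProduct, Fin.sum_univ_two, Pi.single_apply]

lemma stdRep_X1 {G : Subgroup (GL (Fin 2) ℂ)} (g : G)
    (h : ((g : GL (Fin 2) ℂ) : Matrix (Fin 2) (Fin 2) ℂ) = !![0, -1; 1, 0]) :
    stdRep G g (Pi.single 1 1) = (-1 : ℂ) • (Pi.single 0 1 : V2) := by
  rw [stdRep_apply, h]
  ext i
  fin_cases i <;> simp [Matrix.mulVec, dotProduct, Fin.sum_univ_two, Pi.single_apply]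

lemma stdRep_A0 {G : Subgroup (GL (Fin 2) ℂ)} (g : G) (a b : ℂ)
    (h : ((g : GL (Fin 2) ℂ) : Matrix (Fin 2) (Fin 2) ℂ) = !![a, 0; 0, b]) :
    stdRep G g (Pi.single 0 1) = a • (Pi.single 0 1 : V2) := by
  rw [stdRep_apply, h]
  ext i
  fin_cases i <;> simp [Matrix.mulVec, dotProduct, Fin.sum_univ_two, Pi.single_apply]

lemma stdRep_A1 {G : Subgroup (GL (Fin 2) ℂ)} (g : G) (a b : ℂ)
    (h : ((g : GL (Fin 2) ℂ) : Matrix (Fin 2) (Fin 2) ℂ) = !![a, 0; 0, b]) :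
    stdRep G g (Pi.single 1 1) = b • (Pi.single 1 1 : V2) := by
  rw [stdRep_apply, h]
  ext i
  fin_cases i <;> simp [Matrix.mulVec, dotProduct, Fin.sum_univ_two, Pi.single_apply]

lemma range_pair (j : ℕ) : Set.range ![vpow 0 j, vpow 1 j] = {vpow 0 j, vpow 1 j} := by
  ext x
  simp [Fin.exists_fin_two]
  tauto

lemma finrank_Vsub (j : ℕ) : Module.finrank ℂ (Vsub j) = 2 := by
  have := finrank_span_eq_card (vpow_li j)
  rwa [range_pair, Fintype.card_fin] at this

instance Vsub_fd (j : ℕ) : FiniteDimensional ℂ (Vsub j) :=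
  FiniteDimensional.span_of_finite ℂ ((Set.finite_singleton _).insert _)

lemma inv_stable {M : Type*} [AddCommGroup M] [Module ℂ M] {G : Type*} [Group G]
    (ρ : Representation ℂ G M) (g : G) (p : Submodule ℂ M) [FiniteDimensional ℂ p]
    (h : Submodule.map (ρ g) p ≤ p) : Submodule.map (ρ g⁻¹) p ≤ p := by
  let e : M ≃ₗ[ℂ] M := LinearEquiv.ofLinear (ρ g) (ρ g⁻¹)
    (LinearMap.ext fun x => by
      show ρ g (ρ g⁻¹ x) = x
      rw [← Module.End.mul_apply, ← _root_.map_mul, mul_inv_cancel, _root_.map_one,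
        Module.End.one_apply])
    (LinearMap.ext fun x => by
      show ρ g⁻¹ (ρ g x) = x
      rw [← Module.End.mul_apply, ← _root_.map_mul, inv_mul_cancel, _root_.map_one,
        Module.End.one_apply])
  have hmap : Submodule.map (e : M →ₗ[ℂ] M) p = p := by
    apply Submodule.eq_of_le_of_finrank_eq h
    exact (LinearEquiv.finrank_map_eq e p)
  have : Submodule.map (ρ g⁻¹) (Submodule.map (e : M →ₗ[ℂ] M) p) ≤ p := by
    rw [← Submodule.map_comp]
    have : (ρ g⁻¹) ∘ₗ (e : M →ₗ[ℂ] M) = LinearMap.id := by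
      ext x
      show ρ g⁻¹ (ρ g x) = x
      rw [← Module.End.mul_apply, ← _root_.map_mul, inv_mul_cancel, _root_.map_one, Module.End.one_apply]
    rw [this, Submodule.map_id]
  rwa [hmap] at this

lemma exp_pow_ne_one {θ : ℝ} (hθ : Irrational (θ / Real.pi)) {m : ℕ} (hm : m ≠ 0) :
    Complex.exp (θ * Complex.I) ^ m ≠ 1 := by
  rw [← Complex.exp_nat_mul]
  intro h
  obtain ⟨n, hn⟩ := Complex.exp_eq_one_iff.mp h
  have h2 : ((m : ℂ) * θ) * Complex.I = ((n : ℂ) * (2 * Real.pi)) * Complex.I := by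
    linear_combination hn
  have h3 : (m : ℂ) * θ = (n : ℂ) * (2 * Real.pi) :=
    mul_right_cancel₀ Complex.I_ne_zero h2
  have h4 : (m : ℝ) * θ = (n : ℝ) * (2 * Real.pi) := by exact_mod_cast h3
  apply hθ
  refine ⟨(2 * n / m : ℚ), ?_⟩
  have hm' : (m : ℝ) ≠ 0 := Nat.cast_ne_zero.mpr hm
  push_cast
  field_simp

  nlinarith [Real.pi_ne_zero, h4]

lemma exp_pow_inj {θ : ℝ} (hθ : Irrational (θ / Real.pi)) {m n : ℕ}
    (h : Complex.exp (θ * Complex.I) ^ m = Complex.exp (θ * Complex.I) ^ n) : m = n := by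
  have hl : Complex.exp (θ * Complex.I) ≠ 0 := Complex.exp_ne_zero _
  have key : ∀ m n : ℕ, m < n →
      Complex.exp (θ * Complex.I) ^ m = Complex.exp (θ * Complex.I) ^ n → False := by
    intro m n hmn h
    apply exp_pow_ne_one hθ (m := n - m) (by omega)
    have h2 : Complex.exp (θ * Complex.I) ^ m * Complex.exp (θ * Complex.I) ^ (n - m)
        = Complex.exp (θ * Complex.I) ^ m * 1 := by
      rw [← pow_add, mul_one, h]
      congr 1
      omega
    exact mul_left_cancel₀ (pow_ne_zero _ hl) h2
  rcases lt_trichotomy m n with hmn | hmn | hmn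
  · exact absurd h (fun h => key m n hmn h)
  · exact hmn
  · exact absurd h.symm (fun h => key n m hmn h)

lemma pair_coeff {j : ℕ} {a b : ℂ} (h : a • vpow 0 j + b • vpow 1 j = 0) :
    a = 0 ∧ b = 0 := by
  have h2 := Fintype.linearIndependent_iff.mp (vpow_li j) ![a, b]
    (by simpa [Fin.sum_univ_two] using h)
  exact ⟨h2 0, h2 1⟩

/-- For every `k ≥ 1`, the subspace `V_k` of `V^{⊗k}` (spanned by `v₁^{⊗k}, v₂^{⊗k}`) is a
simple two-dimensional `Dic∞`-subrepresentation, and for `i ≠ j` (with `i, j ≥ 1`) the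
representations `V_i` and `V_j` are not isomorphic as `Dic∞`-representations. -/
theorem Vsub_simple_two_dimensional_pairwise_nonIso
    (θ : ℝ) (hθ : Irrational (θ / Real.pi)) (X A : GL (Fin 2) ℂ)
    (hX : (X : Matrix (Fin 2) (Fin 2) ℂ) = !![0, -1; 1, 0])
    (hA : (A : Matrix (Fin 2) (Fin 2) ℂ) =
      !![Complex.exp (θ * Complex.I), 0; 0, Complex.exp (-(θ * Complex.I))])
    (G : Subgroup (GL (Fin 2) ℂ)) (hG : G = Subgroup.closure {X, A}) :
    (∀ k : ℕ, 1 ≤ k →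
      -- `V_k` is a subrepresentation:
      (∀ (g : G) (v : TPow (k - 1)), v ∈ Vsub (k - 1) →
        TPowRep G (k - 1) g v ∈ Vsub (k - 1)) ∧
      -- `V_k` is two-dimensional:
      Module.finrank ℂ (Vsub (k - 1)) = 2 ∧
      -- `V_k` is simple: every invariant subspace contained in it is `0` or all of it:
      (∀ q : Submodule ℂ (TPow (k - 1)), q ≤ Vsub (k - 1) →
        (∀ (g : G) (v : TPow (k - 1)), v ∈ q → TPowRep G (k - 1) g v ∈ q) →
        q = ⊥ ∨ q = Vsub (k - 1))) ∧
    -- for `i ≠ j`, `V_i` and `V_j` are not isomorphic as `Dic∞`-representations: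
    (∀ i j : ℕ, 1 ≤ i → 1 ≤ j → i ≠ j →
      ¬ ∃ f : (Vsub (i - 1)) ≃ₗ[ℂ] (Vsub (j - 1)),
        ∀ (g : G) (w w' : Vsub (i - 1)),
          TPowRep G (i - 1) g (w : TPow (i - 1)) = (w' : TPow (i - 1)) →
          TPowRep G (j - 1) g (f w : TPow (j - 1)) = (f w' : TPow (j - 1))) := by
  subst hG
  set lam : ℂ := Complex.exp (θ * Complex.I) with hlam
  have hl0 : lam ≠ 0 := Complex.exp_ne_zero _
  set Gc := Subgroup.closure {X, A} with hGc
  have hXmem : X ∈ Gc := Subgroup.subset_closure (Set.mem_insert _ _)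
  have hAmem : A ∈ Gc := Subgroup.subset_closure (Set.mem_insert_of_mem _ rfl)
  set gX : Gc := ⟨X, hXmem⟩ with hgX
  set gA : Gc := ⟨A, hAmem⟩ with hgA
  -- action of the generators on the spanning vectors
  have hXv0 : ∀ j, TPowRep Gc j gX (vpow 0 j) = vpow 1 j := by
    intro j
    have := tpowrep_vpow gX (stdRep_X0 gX hX) j
    simpa using this
  have hXv1 : ∀ j, TPowRep Gc j gX (vpow 1 j) = (-1 : ℂ) ^ (j + 1) • vpow 0 j :=
    fun j => tpowrep_vpow gX (stdRep_X1 gX hX) j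
  have hAv0 : ∀ j, TPowRep Gc j gA (vpow 0 j) = lam ^ (j + 1) • vpow 0 j :=
    fun j => tpowrep_vpow gA (stdRep_A0 gA _ _ hA) j
  have hAv1 : ∀ j, TPowRep Gc j gA (vpow 1 j) = (lam⁻¹) ^ (j + 1) • vpow 1 j := by
    intro j
    have h := tpowrep_vpow gA (stdRep_A1 gA _ _ hA) j
    rwa [Complex.exp_neg] at h
  have hmem0 : ∀ j, vpow 0 j ∈ Vsub j :=
    fun j => Submodule.subset_span (Set.mem_insert _ _)
  have hmem1 : ∀ j, vpow 1 j ∈ Vsub j :=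
    fun j => Submodule.subset_span (Set.mem_insert_of_mem _ rfl)
  -- invariance of `Vsub` under the whole group
  have key : ∀ j (x : GL (Fin 2) ℂ) (hx : x ∈ Gc),
      Submodule.map (TPowRep Gc j ⟨x, hx⟩) (Vsub j) ≤ Vsub j := by
    intro j x hx
    induction hx using Subgroup.closure_induction with
    | mem y hy =>
      rcases hy with rfl | hy
      · rintro v ⟨w, hw, rfl⟩
        have hspan : w ∈ Submodule.span ℂ {vpow 0 j, vpow 1 j} := hw
        obtain ⟨a, b, rfl⟩ := Submodule.mem_span_pair.mp hspan
        rw [map_add, _root_.map_smul, _root_.map_smul]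
        show a • TPowRep Gc j gX (vpow 0 j) + b • TPowRep Gc j gX (vpow 1 j) ∈ Vsub j
        rw [hXv0, hXv1]
        exact Submodule.add_mem _ (Submodule.smul_mem _ _ (hmem1 j))
          (Submodule.smul_mem _ _ (Submodule.smul_mem _ _ (hmem0 j)))
      · rcases hy with rfl
        rintro v ⟨w, hw, rfl⟩
        obtain ⟨a, b, rfl⟩ := Submodule.mem_span_pair.mp hw
        rw [map_add, _root_.map_smul, _root_.map_smul]
        show a • TPowRep Gc j gA (vpow 0 j) + b • TPowRep Gc j gA (vpow 1 j) ∈ Vsub j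
        rw [hAv0, hAv1]
        exact Submodule.add_mem _ (Submodule.smul_mem _ _ (Submodule.smul_mem _ _ (hmem0 j)))
          (Submodule.smul_mem _ _ (Submodule.smul_mem _ _ (hmem1 j)))
    | one =>
      have : ((⟨1, Subgroup.one_mem Gc⟩ : Gc)) = (1 : Gc) := rfl
      rw [this, _root_.map_one]
      rintro v ⟨w, hw, rfl⟩
      exact hw
    | mul y z hy hz ihy ihz =>
      have : ((⟨y * z, mul_mem hy hz⟩ : Gc)) = ⟨y, hy⟩ * ⟨z, hz⟩ := rfl
      rw [this, _root_.map_mul]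
      rintro v ⟨w, hw, rfl⟩
      show TPowRep Gc j ⟨y, hy⟩ (TPowRep Gc j ⟨z, hz⟩ w) ∈ Vsub j
      exact ihy ⟨_, ihz ⟨w, hw, rfl⟩, rfl⟩
    | inv y hy ihy =>
      have : ((⟨y⁻¹, inv_mem hy⟩ : Gc)) = (⟨y, hy⟩ : Gc)⁻¹ := rfl
      rw [this]
      exact inv_stable (TPowRep Gc j) ⟨y, hy⟩ (Vsub j) ihy
  have hinv : ∀ j (g : Gc) (v : TPow j), v ∈ Vsub j →
      TPowRep Gc j g v ∈ Vsub j := by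
    intro j g v hv
    exact key j g g.2 ⟨v, hv, rfl⟩
  -- distinct eigenvalues
  have hdist : ∀ m : ℕ, m ≠ 0 → lam ^ m ≠ (lam⁻¹) ^ m := by
    intro m hm h
    apply exp_pow_ne_one hθ (m := m + m) (by omega)
    rw [pow_add]
    nth_rewrite 1 [h]
    rw [inv_pow]
    exact inv_mul_cancel₀ (pow_ne_zero _ hl0)
  constructor
  · -- part 1
    intro k hk
    set j := k - 1 with hj
    refine ⟨fun g v hv => hinv j g v hv, finrank_Vsub j, ?_⟩
    intro q hqle hqinv
    by_cases hbot : q = ⊥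
    · exact Or.inl hbot
    right
    obtain ⟨v, hvq, hv0⟩ := Submodule.exists_mem_ne_zero_of_ne_bot hbot
    obtain ⟨a, b, hab⟩ := Submodule.mem_span_pair.mp (hqle hvq)
    have hAq : TPowRep Gc j gA v ∈ q := hqinv gA v hvq
    have hAv : TPowRep Gc j gA v
        = a • (lam ^ (j + 1) • vpow 0 j) + b • ((lam⁻¹) ^ (j + 1) • vpow 1 j) := by
      rw [← hab, map_add, _root_.map_smul, _root_.map_smul, hAv0, hAv1]
    have hu0u1 : vpow 0 j ∈ q ∧ vpow 1 j ∈ q := by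
      by_cases ha : a = 0
      · -- then b ≠ 0 and u1 ∈ q
        have hb : b ≠ 0 := by
          intro hb
          apply hv0
          rw [← hab, ha, hb, zero_smul, zero_smul, add_zero]
        have hz : TPowRep Gc j gA v - lam ^ (j + 1) • v
            = (b * ((lam⁻¹) ^ (j + 1) - lam ^ (j + 1))) • vpow 1 j := by
          rw [hAv, ← hab, ha]
          module
        have hzq : (b * ((lam⁻¹) ^ (j + 1) - lam ^ (j + 1))) • vpow 1 j ∈ q := by
          rw [← hz]
          exact Submodule.sub_mem _ hAq (Submodule.smul_mem _ _ hvq)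
        have hc : b * ((lam⁻¹) ^ (j + 1) - lam ^ (j + 1)) ≠ 0 := by
          refine mul_ne_zero hb (sub_ne_zero.mpr ?_)
          exact fun h => hdist (j + 1) (by omega) h.symm
        have hu1 : vpow 1 j ∈ q := by
          have := Submodule.smul_mem q (b * ((lam⁻¹) ^ (j + 1) - lam ^ (j + 1)))⁻¹ hzq
          rwa [inv_smul_smul₀ hc] at this
        have hu0 : vpow 0 j ∈ q := by
          have hXq := hqinv gX _ hu1
          rw [hXv1] at hXq
          have := Submodule.smul_mem q ((-1 : ℂ) ^ (j + 1))⁻¹ hXq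
          rwa [inv_smul_smul₀ (pow_ne_zero _ (by norm_num)) ] at this
        exact ⟨hu0, hu1⟩
      · have hz : TPowRep Gc j gA v - (lam⁻¹) ^ (j + 1) • v
            = (a * (lam ^ (j + 1) - (lam⁻¹) ^ (j + 1))) • vpow 0 j := by
          rw [hAv, ← hab]
          module
        have hzq : (a * (lam ^ (j + 1) - (lam⁻¹) ^ (j + 1))) • vpow 0 j ∈ q := by
          rw [← hz]
          exact Submodule.sub_mem _ hAq (Submodule.smul_mem _ _ hvq)
        have hc : a * (lam ^ (j + 1) - (lam⁻¹) ^ (j + 1)) ≠ 0 :=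
          mul_ne_zero ha (sub_ne_zero.mpr (hdist (j + 1) (by omega)))
        have hu0 : vpow 0 j ∈ q := by
          have := Submodule.smul_mem q (a * (lam ^ (j + 1) - (lam⁻¹) ^ (j + 1)))⁻¹ hzq
          rwa [inv_smul_smul₀ hc] at this
        have hu1 : vpow 1 j ∈ q := by
          have hXq := hqinv gX _ hu0
          rwa [hXv0] at hXq
        exact ⟨hu0, hu1⟩
    refine le_antisymm hqle ?_
    rw [Vsub, Submodule.span_le]
    rintro y (rfl | hy)
    · exact hu0u1.1
    · rcases hy with rfl
      exact hu0u1.2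
  · -- part 2: non-isomorphism
    intro i j hi hj hij ⟨f, hf⟩
    have hpq : (i - 1) + 1 ≠ (j - 1) + 1 := by omega
    set U0 : Vsub (i - 1) := ⟨vpow 0 (i - 1), hmem0 (i - 1)⟩ with hU0
    have hU0ne : U0 ≠ 0 := by
      intro h
      exact (vpow_li (i - 1)).ne_zero 0 (by simpa [hU0, Subtype.ext_iff] using h)
    have heq : TPowRep Gc (i - 1) gA (U0 : TPow (i - 1))
        = ((lam ^ ((i - 1) + 1) • U0 : Vsub (i - 1)) : TPow (i - 1)) := by
      show TPowRep Gc (i - 1) gA (vpow 0 (i - 1)) = lam ^ ((i - 1) + 1) • vpow 0 (i - 1)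
      exact hAv0 (i - 1)
    have hfe := hf gA U0 (lam ^ ((i - 1) + 1) • U0) heq
    rw [_root_.map_smul] at hfe
    set y : TPow (j - 1) := (f U0 : TPow (j - 1)) with hy'
    have hyq : y ∈ Vsub (j - 1) := (f U0).2
    have hyne : y ≠ 0 := by
      intro h
      apply hU0ne
      apply f.injective
      rw [map_zero]
      exact Subtype.ext h
    have hfy : TPowRep Gc (j - 1) gA y = lam ^ ((i - 1) + 1) • y := hfe
    obtain ⟨a, b, hab⟩ := Submodule.mem_span_pair.mp hyq
    have hexp : TPowRep Gc (j - 1) gA y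
        = a • (lam ^ ((j - 1) + 1) • vpow 0 (j - 1))
          + b • ((lam⁻¹) ^ ((j - 1) + 1) • vpow 1 (j - 1)) := by
      rw [← hab, map_add, _root_.map_smul, _root_.map_smul, hAv0, hAv1]
    have hzero : (a * lam ^ ((j - 1) + 1) - lam ^ ((i - 1) + 1) * a) • vpow 0 (j - 1)
        + (b * (lam⁻¹) ^ ((j - 1) + 1) - lam ^ ((i - 1) + 1) * b) • vpow 1 (j - 1) = 0 := by
      have h2 : TPowRep Gc (j - 1) gA y - lam ^ ((i - 1) + 1) • y = 0 := by
        rw [hfy, sub_self]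
      rw [hexp, ← hab] at h2
      rw [← h2]
      module
    obtain ⟨h0, h1⟩ := pair_coeff hzero
    by_cases ha : a = 0
    · have hb : b ≠ 0 := by
        intro hb
        apply hyne
        rw [← hab, ha, hb, zero_smul, zero_smul, add_zero]
      have hbe : b * ((lam⁻¹) ^ ((j - 1) + 1) - lam ^ ((i - 1) + 1)) = 0 := by
        linear_combination h1
      have h3 : (lam⁻¹) ^ ((j - 1) + 1) = lam ^ ((i - 1) + 1) :=
        sub_eq_zero.mp ((mul_eq_zero.mp hbe).resolve_left hb)
      apply exp_pow_ne_one hθ (m := ((i - 1) + 1) + ((j - 1) + 1)) (by omega)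
      rw [pow_add, ← h3, inv_pow]
      exact inv_mul_cancel₀ (pow_ne_zero _ hl0)
    · have hae : a * (lam ^ ((j - 1) + 1) - lam ^ ((i - 1) + 1)) = 0 := by
        linear_combination h0
      have h3 : lam ^ ((j - 1) + 1) = lam ^ ((i - 1) + 1) :=
        sub_eq_zero.mp ((mul_eq_zero.mp hae).resolve_left ha)
      exact hpq (exp_pow_inj hθ h3.symm)
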